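/- Let (A_t)_{t∈G} and (B_t)_{t∈G} be concrete Fell bundles over a group G in a C*-algebra L, and let (X_t)_{t∈G} be a concrete strong (A_t)–(B_t) equivalence bundle. Then (A_t) is saturated (A_r⋅A_s = A_{rs} for all r,s) if and only if (B_t) is saturated (B_r⋅B_s = B_{rs} for all r,s). In other words, saturation of Fell bundles is invariant under strong equivalence. -/
import Mathlib


/-- The closed linear span (over `ℂ`) of a set in a normed `ℂ`-algebra. -/
noncomputable def closedSpan {L : Type*} [NormedRing L] [NormedAlgebra ℂ L]
    (S : Set L) : Submodule ℂ L :=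
  (Submodule.span ℂ S).topologicalClosure

/-- `S⋅T`: the closed linear span of all products `s * t` with `s ∈ S`, `t ∈ T`. -/
noncomputable def mulSpan {L : Type*} [NormedRing L] [NormedAlgebra ℂ L]
    (S T : Set L) : Submodule ℂ L :=
  closedSpan (Set.image2 (· * ·) S T)

set_option linter.unusedSectionVars false
set_option maxHeartbeats 800000

section Aux
variable {L : Type*} [NormedRing L] [NormedAlgebra ℂ L]

lemma isClosed_closedSpan (S : Set L) : IsClosed (closedSpan S : Set L) :=
  Submodule.isClosed_topologicalClosure _

lemma isClosed_mulSpan (S T : Set L) : IsClosed (mulSpan S T : Set L) :=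
  isClosed_closedSpan _

lemma subset_closedSpan (S : Set L) : S ⊆ (closedSpan S : Set L) :=
  (Submodule.subset_span).trans (Submodule.le_topologicalClosure _)

lemma closedSpan_le {S : Set L} {M : Submodule ℂ L} (hM : IsClosed (M : Set L))
    (h : S ⊆ (M : Set L)) : closedSpan S ≤ M :=
  Submodule.topologicalClosure_minimal _ (Submodule.span_le.2 h) hM

lemma mem_mulSpan {S T : Set L} {s t : L} (hs : s ∈ S) (ht : t ∈ T) :
    s * t ∈ mulSpan S T :=
  subset_closedSpan _ (Set.mem_image2_of_mem hs ht)

lemma mulSpan_le {S T : Set L} {M : Submodule ℂ L} (hM : IsClosed (M : Set L))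
    (h : ∀ s ∈ S, ∀ t ∈ T, s * t ∈ M) : mulSpan S T ≤ M :=
  closedSpan_le hM (by rintro _ ⟨s, hs, t, ht, rfl⟩; exact h s hs t ht)

/-- multiply on the right by a fixed element. -/
lemma mul_right_mem_of_mem_closedSpan {S : Set L} {M : Submodule ℂ L}
    (hM : IsClosed (M : Set L)) {t : L} (h : ∀ s ∈ S, s * t ∈ M) {x : L}
    (hx : x ∈ closedSpan S) : x * t ∈ M := by
  let f : L →L[ℂ] L := (ContinuousLinearMap.mul ℂ L).flip t
  have hf : ∀ y : L, f y = y * t := fun y => rfl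
  have hle : closedSpan S ≤ M.comap (f : L →ₗ[ℂ] L) := by
    refine closedSpan_le ?_ ?_
    · exact hM.preimage f.continuous
    · intro s hs
      simpa [Submodule.mem_comap, hf] using h s hs
  simpa [Submodule.mem_comap, hf] using hle hx

lemma mul_left_mem_of_mem_closedSpan {S : Set L} {M : Submodule ℂ L}
    (hM : IsClosed (M : Set L)) {t : L} (h : ∀ s ∈ S, t * s ∈ M) {x : L}
    (hx : x ∈ closedSpan S) : t * x ∈ M := by
  let f : L →L[ℂ] L := ContinuousLinearMap.mul ℂ L t
  have hf : ∀ y : L, f y = t * y := fun y => rfl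
  have hle : closedSpan S ≤ M.comap (f : L →ₗ[ℂ] L) := by
    refine closedSpan_le ?_ ?_
    · exact hM.preimage f.continuous
    · intro s hs
      simpa [Submodule.mem_comap, hf] using h s hs
  simpa [Submodule.mem_comap, hf] using hle hx

end Aux

section StarAux
variable {L : Type*} [NormedRing L] [StarRing L] [CStarRing L]
  [NormedAlgebra ℂ L] [StarModule ℂ L]

lemma star_image_eq_preimage (S : Set L) : star '' S = star ⁻¹' S := by
  ext y
  constructor
  · rintro ⟨x, hx, rfl⟩; simpa using hx
  · intro hy; exact ⟨star y, hy, star_star y⟩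

lemma star_image_image2 (S T : Set L) :
    star '' (Set.image2 (· * ·) S T)
      = Set.image2 (· * ·) (star '' T) (star '' S) := by
  ext y
  constructor
  · rintro ⟨_, ⟨s, hs, t, ht, rfl⟩, rfl⟩
    exact ⟨star t, ⟨t, ht, rfl⟩, star s, ⟨s, hs, rfl⟩, (star_mul s t).symm⟩
  · rintro ⟨_, ⟨t, ht, rfl⟩, _, ⟨s, hs, rfl⟩, rfl⟩
    exact ⟨s * t, ⟨s, hs, t, ht, rfl⟩, star_mul s t⟩

/-- The set `star '' M` of a `ℂ`-submodule is again a `ℂ`-submodule. -/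
def starSub (M : Submodule ℂ L) : Submodule ℂ L where
  carrier := star ⁻¹' (M : Set L)
  add_mem' := by
    intro a b ha hb
    simpa [star_add] using add_mem (show star a ∈ M from ha) (show star b ∈ M from hb)
  zero_mem' := by simp
  smul_mem' := by
    intro c a ha
    simpa [star_smul] using M.smul_mem (star c) (show star a ∈ M from ha)

lemma mem_starSub {M : Submodule ℂ L} {x : L} : x ∈ starSub M ↔ star x ∈ M := Iff.rfl

lemma starSub_coe (M : Submodule ℂ L) :
    (starSub M : Set L) = star '' (M : Set L) :=
  (star_image_eq_preimage (M : Set L)).symm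

lemma star_mem_closedSpan {S : Set L} {x : L} (hx : x ∈ closedSpan S) :
    star x ∈ closedSpan (star '' S) := by
  have hle : closedSpan S ≤ starSub (closedSpan (star '' S)) := by
    refine closedSpan_le ?_ ?_
    · exact (isClosed_closedSpan _).preimage continuous_star
    · intro s hs
      exact subset_closedSpan _ ⟨s, hs, rfl⟩
  exact hle hx

end StarAux

set_option linter.unusedSectionVars false
set_option maxHeartbeats 800000

section CStarTrick
variable {L : Type*} [NormedRing L] [StarRing L] [CStarRing L]
  [NormedAlgebra ℂ L] [StarModule ℂ L] [CompleteSpace L]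

lemma aux_pow (x y : L) (n : ℕ) : x * (y * x) ^ n = (x * y) ^ n * x := by
  induction n with
  | zero => simp
  | succ n ih =>
      rw [pow_succ', pow_succ', mul_assoc (x*y), ← ih, ← mul_assoc (x*y), mul_assoc x y x, ← mul_assoc]

lemma mem_closedSpan_triple (x : L) :
    x ∈ closedSpan {y : L | ∃ k : ℕ, y = x * (star x * x) ^ (k + 1)} := by
  letI : CStarAlgebra L :=
    { ‹NormedRing L›, ‹StarRing L›, ‹CompleteSpace L›, ‹CStarRing L›,
      ‹NormedAlgebra ℂ L›, ‹StarModule ℂ L› with }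
  by_cases hx0 : x = 0
  · subst hx0; exact zero_mem _
  set P := closedSpan {y : L | ∃ k : ℕ, y = x * (star x * x) ^ (k + 1)} with hP
  set a : L := star x * x with ha_def
  have ha : IsSelfAdjoint a := IsSelfAdjoint.star_mul_self x
  set M : ℝ := ‖x‖ * ‖x‖ with hM_def
  have hM : 0 < M := mul_pos (norm_pos_iff.2 hx0) (norm_pos_iff.2 hx0)
  have hnorm_a : ‖a‖ = M := CStarRing.norm_star_mul_self
  have hspec0 : ∀ t ∈ spectrum ℝ a, 0 ≤ t := spectrum_star_mul_self_nonneg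
  have hspecM : ∀ t ∈ spectrum ℝ a, t ≤ M := by
    intro t ht
    have h1 : ‖(id : ℝ → ℝ) t‖ ≤ ‖cfc (id : ℝ → ℝ) a‖ :=
      norm_apply_le_norm_cfc (id : ℝ → ℝ) a ht
    rw [cfc_id ℝ a] at h1
    calc t ≤ |t| := le_abs_self t
    _ ≤ ‖a‖ := h1
    _ = M := hnorm_a
  set Q : Submodule ℂ L := Submodule.span ℂ {w : L | ∃ k : ℕ, w = a ^ (k + 1)} with hQ
  have hQa : ∀ w ∈ Q, w * a ∈ Q := by
    intro w hw
    induction hw using Submodule.span_induction with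
    | mem w hw =>
        obtain ⟨k, rfl⟩ := hw
        exact Submodule.subset_span ⟨k + 1, (pow_succ a (k + 1)).symm⟩
    | zero => simpa using Q.zero_mem
    | add u v _ _ hu hv => simpa [add_mul] using Q.add_mem hu hv
    | smul c u _ hu => simpa [smul_mul_assoc] using Q.smul_mem c hu
  have haQ : a ∈ Q := Submodule.subset_span ⟨0, by simp⟩
  set c : ℂ := (M : ℂ)⁻¹ with hc_def
  set b : L := 1 - c • a with hb_def
  have hbQ : ∀ n : ℕ, (1 : L) - b ^ n ∈ Q := by
    intro n
    induction n with
    | zero => simpa using Q.zero_mem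
    | succ n ih =>
        have h1 : b ^ (n + 1) = b ^ n - c • (b ^ n * a) := by
          rw [pow_succ, hb_def, mul_sub, mul_one, mul_smul_comm]
        have h2 : b ^ n * a = a - (1 - b ^ n) * a := by
          rw [sub_mul, one_mul, sub_sub_cancel]
        have h3 : (1 : L) - (b ^ n - c • (b ^ n * a))
            = (1 - b ^ n) + c • (b ^ n * a) := by abel
        rw [h1, h3, h2]
        exact Q.add_mem ih (Q.smul_mem c (Q.sub_mem haQ (hQa _ ih)))
  have hxQ : ∀ w ∈ Q, x * w ∈ P := by
    intro w hw
    induction hw using Submodule.span_induction with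
    | mem w hw =>
        obtain ⟨k, rfl⟩ := hw
        exact subset_closedSpan _ ⟨k, rfl⟩
    | zero => simpa using P.zero_mem
    | add u v _ _ hu hv => simpa [mul_add] using P.add_mem hu hv
    | smul d u _ hu => simpa [mul_smul_comm] using P.smul_mem d hu
  -- reduce to metric approximation
  have hclosed : IsClosed (P : Set L) := isClosed_closedSpan _
  have hmem : x ∈ closure (P : Set L) := by
    rw [Metric.mem_closure_iff]
    intro ε hε
    set δ : ℝ := ε ^ 2 / 2 with hδ_def
    set ρ : ℝ := max (1 - δ / M) 0 with hρ_def
    have hρ0 : 0 ≤ ρ := le_max_right _ _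
    have hρ1 : ρ < 1 := by
      apply max_lt _ one_pos
      have : 0 < δ / M := div_pos (by positivity) hM
      linarith
    obtain ⟨n, hn⟩ : ∃ n : ℕ, M * ρ ^ n < ε ^ 2 := by
      have h := tendsto_pow_atTop_nhds_zero_of_lt_one hρ0 hρ1
      have h2 := h.eventually (gt_mem_nhds (show (0:ℝ) < ε ^ 2 / M by positivity))
      obtain ⟨n, hn⟩ := h2.exists
      exact ⟨n, by rwa [← lt_div_iff₀' hM]⟩
    set z : L := x * b ^ n with hz_def
    set y : L := x - z with hy_def
    have hyP : y ∈ P := by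
      have hy2 : y = x * (1 - b ^ n) := by rw [mul_sub, mul_one]
      rw [hy2]; exact hxQ _ (hbQ n)
    refine ⟨y, hyP, ?_⟩
    have hdist : dist x y = ‖z‖ := by
      rw [dist_eq_norm, hy_def, sub_sub_cancel]
    -- self-adjointness of b
    have hstarc : star c = c := by
      have hcreal : c = ((M⁻¹ : ℝ) : ℂ) := by rw [hc_def, Complex.ofReal_inv]
      rw [hcreal, Complex.star_def, Complex.conj_ofReal]
    have hstarb : star b = b := by
      rw [hb_def, star_sub, star_one, star_smul, hstarc, ha.star_eq]
    have hcomm : Commute a b :=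
      (Commute.one_right a).sub_right ((Commute.refl a).smul_right c)
    have hz2 : star z * z = a * b ^ (2 * n) := by
      calc star z * z = (star (b ^ n) * star x) * (x * b ^ n) := by
            rw [hz_def, star_mul]
      _ = (b ^ n * star x) * (x * b ^ n) := by rw [star_pow, hstarb]
      _ = b ^ n * a * b ^ n := by rw [ha_def]; noncomm_ring
      _ = a * b ^ n * b ^ n := by rw [← (hcomm.pow_right n).eq]
      _ = a * b ^ (2 * n) := by rw [mul_assoc, ← pow_add, two_mul]
    -- functional calculus computation
    set f : ℝ → ℝ := fun t => t * (1 - M⁻¹ * t) ^ (2 * n) with hf_def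
    have hg : cfc (fun t : ℝ => 1 - M⁻¹ * t) a = b := by
      have h1 : cfc (fun t : ℝ => 1 - M⁻¹ * t) a
          = cfc (fun _ : ℝ => (1:ℝ)) a - cfc (fun t : ℝ => M⁻¹ * t) a := by
        exact cfc_sub _ _ a (by fun_prop) (by fun_prop)
      rw [h1, cfc_const_one ℝ a, cfc_const_mul_id M⁻¹ a, hb_def]
      congr 1
      rw [← Complex.coe_smul, hc_def, Complex.ofReal_inv]
    have hcfc : cfc f a = a * b ^ (2 * n) := by
      have h1 : cfc f a
          = cfc (fun t : ℝ => t) a * cfc (fun t : ℝ => (1 - M⁻¹ * t) ^ (2 * n)) a :=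
        cfc_mul _ _ a (by fun_prop) (by fun_prop)
      rw [h1, cfc_id' ℝ a, cfc_pow (fun t : ℝ => 1 - M⁻¹ * t) (2 * n) a, hg]
    -- norm bound
    set C : ℝ := max (ε ^ 2 / 2) (M * ρ ^ n) with hC_def
    have hC0 : 0 ≤ C := le_trans (by positivity) (le_max_left _ _)
    have hnormle : ‖cfc f a‖ ≤ C := by
      apply norm_cfc_le hC0
      intro t ht
      have ht0 := hspec0 t ht
      have htM := hspecM t ht
      have hu0 : 0 ≤ 1 - M⁻¹ * t := by
        rw [sub_nonneg, inv_mul_eq_div, div_le_one hM]; exact htM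
      have hu1 : 1 - M⁻¹ * t ≤ 1 := by
        have : 0 ≤ M⁻¹ * t := mul_nonneg (inv_nonneg.2 hM.le) ht0
        linarith
      have hft0 : 0 ≤ f t := mul_nonneg ht0 (pow_nonneg hu0 _)
      rw [Real.norm_eq_abs, abs_of_nonneg hft0]
      by_cases hcase : t ≤ ε ^ 2 / 2
      · calc f t ≤ t * 1 :=
              mul_le_mul_of_nonneg_left (pow_le_one₀ hu0 hu1) ht0
        _ = t := mul_one t
        _ ≤ ε ^ 2 / 2 := hcase
        _ ≤ C := le_max_left _ _
      · push_neg at hcase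
        have hu_le : 1 - M⁻¹ * t ≤ ρ := by
          refine le_trans ?_ (le_max_left _ _)
          have : δ / M ≤ M⁻¹ * t := by
            rw [div_eq_inv_mul]
            exact mul_le_mul_of_nonneg_left hcase.le (inv_nonneg.2 hM.le)
          linarith
        have hupow : (1 - M⁻¹ * t) ^ (2 * n) ≤ ρ ^ n := by
          calc (1 - M⁻¹ * t) ^ (2 * n) ≤ ρ ^ (2 * n) :=
                pow_le_pow_left₀ hu0 hu_le _
          _ ≤ ρ ^ n := pow_le_pow_of_le_one hρ0 hρ1.le (by omega)
        calc f t ≤ M * ρ ^ n :=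
              mul_le_mul htM hupow (pow_nonneg hu0 _) hM.le
        _ ≤ C := le_max_right _ _
    have hCe : C < ε ^ 2 := by
      apply max_lt _ hn
      have : 0 < ε ^ 2 := by positivity
      linarith
    have hzz : ‖z‖ * ‖z‖ < ε ^ 2 := by
      calc ‖z‖ * ‖z‖ = ‖star z * z‖ := (CStarRing.norm_star_mul_self).symm
      _ = ‖cfc f a‖ := by rw [hz2, hcfc]
      _ ≤ C := hnormle
      _ < ε ^ 2 := hCe
    rw [hdist]
    nlinarith [norm_nonneg z]
  rwa [hclosed.closure_eq] at hmem

end CStarTrick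

section OneWay
variable {G L : Type*} [Group G] [NormedRing L] [StarRing L] [CStarRing L]
  [NormedAlgebra ℂ L] [StarModule ℂ L] [CompleteSpace L]

lemma oneWaySaturated (A B X : G → Submodule ℂ L)
    (hBclosed : ∀ t : G, IsClosed (B t : Set L))
    (hBmul : ∀ r s : G, ∀ b ∈ B r, ∀ c ∈ B s, b * c ∈ B (r * s))
    (hBstar : ∀ t : G, ∀ b ∈ B t, star b ∈ B t⁻¹)
    (hAstar : ∀ t : G, ∀ a ∈ A t, star a ∈ A t⁻¹)
    (hXactL : ∀ r s : G, ∀ a ∈ A r, ∀ x ∈ X s, a * x ∈ X (r * s))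
    (hXactR : ∀ r s : G, ∀ x ∈ X r, ∀ b ∈ B s, x * b ∈ X (r * s))
    (hXinnerR : ∀ r s : G, ∀ x ∈ X r, ∀ y ∈ X s, star x * y ∈ B (r⁻¹ * s))
    (hXinnerL : ∀ r s : G, ∀ x ∈ X r, ∀ y ∈ X s, x * star y ∈ A (r * s⁻¹))
    (hsfullR : ∀ t : G,
      mulSpan (star '' (X t : Set L)) (X t : Set L)
        = mulSpan (star '' (B t : Set L)) (B t : Set L))
    (hsfullL : ∀ t : G,
      mulSpan (X t : Set L) (star '' (X t : Set L))
        = mulSpan (A t : Set L) (star '' (A t : Set L)))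
    (hAsat : ∀ r s : G, mulSpan (A r : Set L) (A s : Set L) = A (r * s)) :
    ∀ r s : G, mulSpan (B r : Set L) (B s : Set L) = B (r * s) := by
  intro r s
  apply le_antisymm
  · exact mulSpan_le (hBclosed _) (fun b hb c hc => hBmul r s b hb c hc)
  · intro b hb
    set t : G := r * s with ht
    -- C1 : X t⁻¹ ⊆ span (A s⁻¹ ⋅ X r⁻¹)
    have hC1 : ∀ x ∈ X t⁻¹, x ∈ mulSpan ((A s⁻¹ : Set L)) ((X r⁻¹ : Set L)) := by
      intro x hx
      have hpow : ∀ k : ℕ, (x * star x) ^ k * x ∈ X t⁻¹ := by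
        intro k
        induction k with
        | zero => simpa using hx
        | succ k ih =>
            have h1 : x * star x ∈ A 1 := by
              have := hXinnerL t⁻¹ t⁻¹ x hx x hx
              rwa [mul_inv_cancel] at this
            have h2 := hXactL 1 t⁻¹ _ h1 _ ih
            rw [one_mul] at h2
            rw [pow_succ', mul_assoc]
            exact h2
      have hK1 : x ∈ mulSpan
          (Set.image2 (· * ·) (X t⁻¹ : Set L) (star '' (X t⁻¹ : Set L)))
          (X t⁻¹ : Set L) := by
        refine closedSpan_le (isClosed_mulSpan _ _) ?_ (mem_closedSpan_triple x)
        rintro _ ⟨k, rfl⟩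
        rw [aux_pow, pow_succ', mul_assoc]
        exact mem_mulSpan (Set.mem_image2_of_mem hx ⟨x, hx, rfl⟩) (hpow k)
      refine (mulSpan_le (isClosed_mulSpan _ _) ?_) hK1
      rintro _ ⟨x₁, hx₁, _, ⟨x₂, hx₂, rfl⟩, rfl⟩ x' hx'
      have hp : x₁ * star x₂ ∈ closedSpan
          (Set.image2 (· * ·) (A t⁻¹ : Set L) (star '' (A t⁻¹ : Set L))) := by
        have h1 : x₁ * star x₂ ∈ mulSpan (X t⁻¹ : Set L) (star '' (X t⁻¹ : Set L)) :=
          mem_mulSpan hx₁ ⟨x₂, hx₂, rfl⟩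
        rw [hsfullL t⁻¹] at h1
        exact h1
      refine mul_right_mem_of_mem_closedSpan (isClosed_mulSpan _ _) ?_ hp
      rintro _ ⟨a₁, ha₁, _, ⟨a₂, ha₂, rfl⟩, rfl⟩
      rw [mul_assoc]
      have hw : star a₂ * x' ∈ X 1 := by
        have h1 : star a₂ ∈ A t := by
          have := hAstar t⁻¹ a₂ ha₂; rwa [inv_inv] at this
        have := hXactL t t⁻¹ _ h1 _ hx'
        rwa [mul_inv_cancel] at this
      have ha₁' : a₁ ∈ closedSpan
          (Set.image2 (· * ·) (A s⁻¹ : Set L) (A r⁻¹ : Set L)) := by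
        have h1 : a₁ ∈ A (s⁻¹ * r⁻¹) := by rwa [← mul_inv_rev, ← ht]
        rw [← hAsat s⁻¹ r⁻¹] at h1
        exact h1
      refine mul_right_mem_of_mem_closedSpan (isClosed_mulSpan _ _) ?_ ha₁'
      rintro _ ⟨a₃, ha₃, a₄, ha₄, rfl⟩
      rw [mul_assoc]
      have h4 : a₄ * (star a₂ * x') ∈ X r⁻¹ := by
        have := hXactL r⁻¹ 1 _ ha₄ _ hw
        rwa [mul_one] at this
      exact mem_mulSpan ha₃ h4
    -- C2 : X s ⊆ span (X 1 ⋅ B s)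
    have hC2 : ∀ y ∈ X s, y ∈ mulSpan ((X 1 : Set L)) ((B s : Set L)) := by
      intro y hy
      have hpow : ∀ k : ℕ, y * (star y * y) ^ k ∈ X s := by
        intro k
        induction k with
        | zero => simpa using hy
        | succ k ih =>
            have h1 : star y * y ∈ B 1 := by
              have := hXinnerR s s y hy y hy
              rwa [inv_mul_cancel] at this
            have h2 := hXactR s 1 _ ih _ h1
            rw [mul_one] at h2
            rw [pow_succ, ← mul_assoc]
            exact h2
      have hK1 : y ∈ mulSpan (X s : Set L)
          (Set.image2 (· * ·) (star '' (X s : Set L)) (X s : Set L)) := by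
        refine closedSpan_le (isClosed_mulSpan _ _) ?_ (mem_closedSpan_triple y)
        rintro _ ⟨k, rfl⟩
        rw [pow_succ, ← mul_assoc]
        exact mem_mulSpan (hpow k) (Set.mem_image2_of_mem ⟨y, hy, rfl⟩ hy)
      refine (mulSpan_le (isClosed_mulSpan _ _) ?_) hK1
      intro x' hx' p hp'
      have hp : p ∈ closedSpan
          (Set.image2 (· * ·) (star '' (B s : Set L)) (B s : Set L)) := by
        have h1 : p ∈ mulSpan (star '' (X s : Set L)) (X s : Set L) :=
          subset_closedSpan _ hp'
        rw [hsfullR s] at h1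
        exact h1
      refine mul_left_mem_of_mem_closedSpan (isClosed_mulSpan _ _) ?_ hp
      rintro _ ⟨_, ⟨b₁, hb₁, rfl⟩, b₂, hb₂, rfl⟩
      rw [← mul_assoc]
      have h1 : x' * star b₁ ∈ X 1 := by
        have := hXactR s s⁻¹ _ hx' _ (hBstar s b₁ hb₁)
        rwa [mul_inv_cancel] at this
      exact mem_mulSpan h1 hb₂
    -- step 1
    have hpowb : ∀ k : ℕ, (b * star b) ^ k * b ∈ B t := by
      intro k
      induction k with
      | zero => simpa using hb
      | succ k ih =>
          have h1 : b * star b ∈ B 1 := by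
            have := hBmul t t⁻¹ b hb (star b) (hBstar t b hb)
            rwa [mul_inv_cancel] at this
          have h2 := hBmul 1 t _ h1 _ ih
          rw [one_mul] at h2
          rw [pow_succ', mul_assoc]
          exact h2
    have hs1 : b ∈ mulSpan
        (Set.image2 (· * ·) (B t : Set L) (star '' (B t : Set L))) (B t : Set L) := by
      refine closedSpan_le (isClosed_mulSpan _ _) ?_ (mem_closedSpan_triple b)
      rintro _ ⟨k, rfl⟩
      rw [aux_pow, pow_succ', mul_assoc]
      exact mem_mulSpan (Set.mem_image2_of_mem hb ⟨b, hb, rfl⟩) (hpowb k)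
    -- step 2
    have hs2 : b ∈ mulSpan
        (Set.image2 (· * ·) (star '' (X t⁻¹ : Set L)) (X t⁻¹ : Set L)) (B t : Set L) := by
      refine (mulSpan_le (isClosed_mulSpan _ _) ?_) hs1
      rintro _ ⟨b₁, hb₁, _, ⟨b₂, hb₂, rfl⟩, rfl⟩ c hc
      have hp : b₁ * star b₂ ∈ closedSpan
          (Set.image2 (· * ·) (star '' (X t⁻¹ : Set L)) (X t⁻¹ : Set L)) := by
        have h1 : b₁ * star b₂ ∈ mulSpan (star '' (B t⁻¹ : Set L)) (B t⁻¹ : Set L) := by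
          have e1 : b₁ * star b₂ = star (star b₁) * star b₂ := by rw [star_star]
          rw [e1]
          exact mem_mulSpan ⟨star b₁, hBstar t b₁ hb₁, rfl⟩ (hBstar t b₂ hb₂)
        rw [← hsfullR t⁻¹] at h1
        exact h1
      exact mul_right_mem_of_mem_closedSpan (isClosed_mulSpan _ _)
        (fun g hg => mem_mulSpan hg hc) hp
    -- step 3
    have hs3 : b ∈ mulSpan (star '' (X r⁻¹ : Set L)) (X s : Set L) := by
      refine (mulSpan_le (isClosed_mulSpan _ _) ?_) hs2
      rintro _ ⟨_, ⟨x₁, hx₁, rfl⟩, x₂, hx₂, rfl⟩ c hc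
      rw [mul_assoc]
      have hw : x₂ * c ∈ X 1 := by
        have := hXactR t⁻¹ t _ hx₂ _ hc
        rwa [inv_mul_cancel] at this
      have hx₁' : star x₁ ∈ closedSpan
          (Set.image2 (· * ·) (star '' (X r⁻¹ : Set L)) (star '' (A s⁻¹ : Set L))) := by
        have h1 := hC1 x₁ hx₁
        have h2 := star_mem_closedSpan h1
        rwa [star_image_image2] at h2
      refine mul_right_mem_of_mem_closedSpan (isClosed_mulSpan _ _) ?_ hx₁'
      rintro _ ⟨_, ⟨x₃, hx₃, rfl⟩, _, ⟨a₅, ha₅, rfl⟩, rfl⟩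
      rw [mul_assoc]
      have h3 : star a₅ * (x₂ * c) ∈ X s := by
        have h4 : star a₅ ∈ A s := by
          have := hAstar s⁻¹ a₅ ha₅; rwa [inv_inv] at this
        have := hXactL s 1 _ h4 _ hw
        rwa [mul_one] at this
      exact mem_mulSpan ⟨x₃, hx₃, rfl⟩ h3
    -- step 4
    refine (mulSpan_le (isClosed_mulSpan _ _) ?_) hs3
    rintro _ ⟨x₁, hx₁, rfl⟩ y hy
    refine mul_left_mem_of_mem_closedSpan (isClosed_mulSpan _ _) ?_ (hC2 y hy)
    rintro _ ⟨w, hw, b₂, hb₂, rfl⟩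
    rw [← mul_assoc]
    have h1 : star x₁ * w ∈ B r := by
      have := hXinnerR r⁻¹ 1 x₁ hx₁ w hw
      rwa [inv_inv, mul_one] at this
    exact mem_mulSpan h1 hb₂

end OneWay

section Extra
variable {L : Type*} [NormedRing L] [StarRing L] [CStarRing L]
  [NormedAlgebra ℂ L] [StarModule ℂ L]

lemma star_star_image (S : Set L) : star '' (star '' S) = S := by
  rw [star_image_eq_preimage, star_image_eq_preimage]
  ext y
  simp

end Extra

/-- Saturation is invariant under strong equivalence: if `(X t)` is a concrete
strong `(A t)`–`(B t)` equivalence bundle, then `(A t)` is saturated iff `(B t)` is.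
-/
theorem saturated_iff_saturated_of_strongEquivalence
    {G L : Type*} [Group G] [NormedRing L] [StarRing L] [CStarRing L]
    [NormedAlgebra ℂ L] [StarModule ℂ L] [CompleteSpace L]
    (A B X : G → Submodule ℂ L)
    (hAclosed : ∀ t : G, IsClosed (A t : Set L))
    (hAmul : ∀ r s : G, ∀ a ∈ A r, ∀ a' ∈ A s, a * a' ∈ A (r * s))
    (hAstar : ∀ t : G, ∀ a ∈ A t, star a ∈ A t⁻¹)
    (hBclosed : ∀ t : G, IsClosed (B t : Set L))
    (hBmul : ∀ r s : G, ∀ b ∈ B r, ∀ c ∈ B s, b * c ∈ B (r * s))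
    (hBstar : ∀ t : G, ∀ b ∈ B t, star b ∈ B t⁻¹)
    (hXclosed : ∀ t : G, IsClosed (X t : Set L))
    (hXactL : ∀ r s : G, ∀ a ∈ A r, ∀ x ∈ X s, a * x ∈ X (r * s))
    (hXactR : ∀ r s : G, ∀ x ∈ X r, ∀ b ∈ B s, x * b ∈ X (r * s))
    (hXinnerR : ∀ r s : G, ∀ x ∈ X r, ∀ y ∈ X s, star x * y ∈ B (r⁻¹ * s))
    (hXinnerL : ∀ r s : G, ∀ x ∈ X r, ∀ y ∈ X s, x * star y ∈ A (r * s⁻¹))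
    (hsfullR : ∀ t : G,
      mulSpan (star '' (X t : Set L)) (X t : Set L)
        = mulSpan (star '' (B t : Set L)) (B t : Set L))
    (hsfullL : ∀ t : G,
      mulSpan (X t : Set L) (star '' (X t : Set L))
        = mulSpan (A t : Set L) (star '' (A t : Set L))) :
    (∀ r s : G, mulSpan (A r : Set L) (A s : Set L) = A (r * s)) ↔
      (∀ r s : G, mulSpan (B r : Set L) (B s : Set L) = B (r * s)) := by
  have hAset : ∀ t : G, star '' (A t : Set L) = (A t⁻¹ : Set L) := by
    intro t
    apply Set.eq_of_subset_of_subset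
    · rintro _ ⟨a, ha, rfl⟩; exact hAstar t a ha
    · intro a ha
      refine ⟨star a, ?_, star_star a⟩
      have := hAstar t⁻¹ a ha; rwa [inv_inv] at this
  have hBset : ∀ t : G, star '' (B t : Set L) = (B t⁻¹ : Set L) := by
    intro t
    apply Set.eq_of_subset_of_subset
    · rintro _ ⟨c, hc, rfl⟩; exact hBstar t c hc
    · intro c hc
      refine ⟨star c, ?_, star_star c⟩
      have := hBstar t⁻¹ c hc; rwa [inv_inv] at this
  constructor
  · exact oneWaySaturated A B X hBclosed hBmul hBstar hAstar hXactL hXactR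
      hXinnerR hXinnerL hsfullR hsfullL
  · intro hBsat
    set Y : G → Submodule ℂ L := fun t => starSub (X t⁻¹) with hY
    have hYmem : ∀ t : G, ∀ y : L, y ∈ Y t ↔ star y ∈ X t⁻¹ := fun t y => Iff.rfl
    have hYcoe : ∀ t : G, (Y t : Set L) = star '' (X t⁻¹ : Set L) :=
      fun t => starSub_coe _
    refine oneWaySaturated B A Y hAclosed hAmul hAstar hBstar ?_ ?_ ?_ ?_ ?_ ?_ hBsat
    · -- action of B on the left of Y
      intro r s c hc y hy
      rw [hYmem] at hy ⊢
      rw [star_mul, mul_inv_rev]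
      exact hXactR s⁻¹ r⁻¹ _ hy _ (hBstar r c hc)
    · -- action of A on the right of Y
      intro r s y hy a ha
      rw [hYmem] at hy ⊢
      rw [star_mul, mul_inv_rev]
      exact hXactL s⁻¹ r⁻¹ _ (hAstar s a ha) _ hy
    · -- right inner products of Y land in A
      intro r s y hy z hz
      rw [hYmem] at hy hz
      have := hXinnerL r⁻¹ s⁻¹ _ hy _ hz
      rwa [star_star, inv_inv] at this
    · -- left inner products of Y land in B
      intro r s y hy z hz
      rw [hYmem] at hy hz
      have := hXinnerR r⁻¹ s⁻¹ _ hy _ hz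
      rwa [star_star, inv_inv] at this
    · -- strong right fullness for Y
      intro t
      calc mulSpan (star '' (Y t : Set L)) (Y t : Set L)
          = mulSpan (X t⁻¹ : Set L) (star '' (X t⁻¹ : Set L)) := by
            rw [hYcoe, star_star_image]
        _ = mulSpan (A t⁻¹ : Set L) (star '' (A t⁻¹ : Set L)) := hsfullL t⁻¹
        _ = mulSpan (star '' (A t : Set L)) (A t : Set L) := by
            rw [hAset t, hAset t⁻¹, inv_inv]
    · -- strong left fullness for Y
      intro t
      calc mulSpan (Y t : Set L) (star '' (Y t : Set L))
          = mulSpan (star '' (X t⁻¹ : Set L)) (X t⁻¹ : Set L) := by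
            rw [hYcoe, star_star_image]
        _ = mulSpan (star '' (B t⁻¹ : Set L)) (B t⁻¹ : Set L) := hsfullR t⁻¹
        _ = mulSpan (B t : Set L) (star '' (B t : Set L)) := by
            rw [hBset t⁻¹, inv_inv, ← hBset t]
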